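/- Let P : Q^{s_1} × ... × Q^{s_d} → Q be a multilinear form with integer coefficients, d ≥ 2. Suppose for infinitely many primes p the reduction P mod p satisfies prk_{F̄_p}(P mod p) ≥ r̄. Then prk_{Q̄}(P) ≥ r̄. -/

import Mathlib

open scoped BigOperators

/-- A multilinear form has partition rank one if it factors as a product of two
multilinear forms on complementary nonempty subsets of the coordinates. -/
def IsPartRankOne {k : Type*} [Field k] {d : ℕ} {V : Fin d → Type*}
    [∀ i, AddCommGroup (V i)] [∀ i, Module k (V i)]
    (P : MultilinearMap k V k) : Prop :=
  ∃ I : Set (Fin d), I.Nonempty ∧ Iᶜ.Nonempty ∧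
    ∃ (R : MultilinearMap k (fun i : I => V i.1) k)
      (S : MultilinearMap k (fun j : ↥Iᶜ => V j.1) k),
      ∀ x : (∀ i, V i), P x = R (fun i => x i.1) * S (fun j => x j.1)

/-- `P` is a sum of `r` partition-rank-one multilinear forms. -/
def HasPrkDecomp {k : Type*} [Field k] {d : ℕ} {V : Fin d → Type*}
    [∀ i, AddCommGroup (V i)] [∀ i, Module k (V i)]
    (P : MultilinearMap k V k) (r : ℕ) : Prop :=
  ∃ Q : Fin r → MultilinearMap k V k, (∀ i, IsPartRankOne (Q i)) ∧ P = ∑ i, Q i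

/-- The multilinear form over a field `K` with integer coefficient tensor `c`:
`P(x_1,...,x_d) = Σ_{k_1,...,k_d} c(k) Π_i x_i(k_i)`. -/
noncomputable def intForm (K : Type*) [Field K] {d : ℕ} {s : Fin d → ℕ}
    (c : (∀ i : Fin d, Fin (s i)) → ℤ) :
    MultilinearMap K (fun i : Fin d => Fin (s i) → K) K :=
  ∑ kv : (∀ i : Fin d, Fin (s i)),
    (MultilinearMap.mkPiRing K (Fin d) ((c kv : ℤ) : K)).compLinearMap
      (fun i => LinearMap.proj (kv i))

/-- if a multilinear form with integer coefficients has partition rank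
`≥ r̄` over the algebraic closure of `F_p` (equivalently over every algebraically closed
field of characteristic `p`) for infinitely many primes `p`, then it has partition rank
`≥ r̄` over the algebraic closure of `ℚ` (equivalently over every algebraically closed
field of characteristic `0`). -/

noncomputable def cForm (K : Type*) [Field K] {ι : Type*} [Fintype ι] [DecidableEq ι] {s : ι → ℕ}
    (a : (∀ i, Fin (s i)) → K) : MultilinearMap K (fun i : ι => Fin (s i) → K) K :=
  ∑ kv : (∀ i, Fin (s i)),
    (MultilinearMap.mkPiRing K ι (a kv)).compLinearMap (fun i => LinearMap.proj (kv i))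

lemma cForm_apply (K : Type*) [Field K] {ι : Type*} [Fintype ι] [DecidableEq ι] {s : ι → ℕ}
    (a : (∀ i, Fin (s i)) → K) (x : ∀ i : ι, Fin (s i) → K) :
    cForm K a x = ∑ kv : (∀ i, Fin (s i)), a kv * ∏ i, x i (kv i) := by
  simp [cForm, MultilinearMap.mkPiRing_apply, smul_eq_mul, mul_comm]

lemma intForm_eq_cForm (K : Type*) [Field K] {d : ℕ} {s : Fin d → ℕ}
    (c : (∀ i : Fin d, Fin (s i)) → ℤ) :
    intForm K c = cForm K (fun kv => ((c kv : ℤ) : K)) := rfl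
section
variable {K : Type*} [Field K] {d : ℕ} {s : Fin d → ℕ}

/-- Coefficient-level decomposition. -/
def CoeffDecomp (K : Type*) [Field K] {d : ℕ} {s : Fin d → ℕ}
    (c : (∀ i : Fin d, Fin (s i)) → ℤ) (m : ℕ) : Prop :=
  ∃ I : Fin m → Finset (Fin d), (∀ i, (I i).Nonempty) ∧ (∀ i, (I i)ᶜ.Nonempty) ∧
    ∃ (a : ∀ i : Fin m, (((j : {x : Fin d // x ∈ I i}) → Fin (s j.1))) → K)
      (b : ∀ i : Fin m, (((j : {x : Fin d // x ∉ I i}) → Fin (s j.1))) → K),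
      ∀ kv : (∀ i : Fin d, Fin (s i)),
        ((c kv : ℤ) : K) = ∑ i : Fin m, a i (fun j => kv j.1) * b i (fun j => kv j.1)

lemma intForm_apply_single (c : (∀ i : Fin d, Fin (s i)) → ℤ)
    (kv : ∀ i : Fin d, Fin (s i)) :
    intForm K c (fun i => Pi.single (kv i) (1 : K)) = ((c kv : ℤ) : K) := by
  rw [intForm_eq_cForm, cForm_apply]
  rw [Finset.sum_eq_single kv]
  · simp
  · intro kv' _ hne
    have : ∃ i, kv' i ≠ kv i := by
      by_contra h
      push_neg at h
      exact hne (funext h)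
    obtain ⟨i, hi⟩ := this
    rw [Finset.prod_eq_zero (Finset.mem_univ i)]
    · ring
    · simp [Pi.single_apply, hi]
  · simp

lemma coeffDecomp_of_hasPrkDecomp (c : (∀ i : Fin d, Fin (s i)) → ℤ) (m : ℕ)
    (h : HasPrkDecomp (intForm K c) m) : CoeffDecomp K c m := by
  classical
  obtain ⟨Q, hQ, hsum⟩ := h
  choose I hI hIc R S hRS using hQ
  refine ⟨fun i => (I i).toFinset, ?_, ?_, ?_⟩
  · intro i
    obtain ⟨x, hx⟩ := hI i
    exact ⟨x, (Set.mem_toFinset).2 hx⟩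
  · intro i
    obtain ⟨x, hx⟩ := hIc i
    exact ⟨x, by simpa [Finset.mem_compl, Set.mem_toFinset] using hx⟩
  · refine ⟨fun i g => R i (fun j => Pi.single (g ⟨j.1, (Set.mem_toFinset).2 j.2⟩) 1),
      fun i g => S i (fun j => Pi.single (g ⟨j.1, fun hmem => ((Set.mem_compl_iff _ _).1 j.2) (Set.mem_toFinset.1 hmem)⟩) 1), ?_⟩
    intro kv
    rw [← intForm_apply_single c kv, hsum]
    rw [MultilinearMap.sum_apply]
    refine Finset.sum_congr rfl ?_
    intro i _
    rw [hRS i]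

lemma cForm_factor {ι : Type*} [Fintype ι] [DecidableEq ι] {s' : ι → ℕ}
    (p : ι → Prop) [DecidablePred p]
    (A : ((j : {x : ι // p x}) → Fin (s' j.1)) → K)
    (B : ((j : {x : ι // ¬ p x}) → Fin (s' j.1)) → K)
    (x : ∀ j : ι, Fin (s' j) → K) :
    cForm K (fun kv => A (fun j => kv j.1) * B (fun j => kv j.1)) x
      = cForm K (s := fun j : {x : ι // p x} => s' j.1) A (fun j => x j.1)
        * cForm K (s := fun j : {x : ι // ¬ p x} => s' j.1) B (fun j => x j.1) := by
  classical
  rw [cForm_apply, cForm_apply, cForm_apply, Finset.sum_mul_sum]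
  rw [← Equiv.sum_comp (Equiv.piEquivPiSubtypeProd p (fun j => Fin (s' j))).symm
    (fun kv => (A (fun j => kv j.1) * B (fun j => kv j.1)) * ∏ j, x j (kv j))]
  rw [Fintype.sum_prod_type]
  refine Finset.sum_congr rfl fun g _ => Finset.sum_congr rfl fun h _ => ?_
  have h1 : (fun (j : {x : ι // p x}) =>
      (Equiv.piEquivPiSubtypeProd p (fun j => Fin (s' j))).symm (g, h) j.1) = g := by
    funext j
    simp [Equiv.piEquivPiSubtypeProd, j.2]
  have h2 : (fun (j : {x : ι // ¬ p x}) =>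
      (Equiv.piEquivPiSubtypeProd p (fun j => Fin (s' j))).symm (g, h) j.1) = h := by
    funext j
    simp [Equiv.piEquivPiSubtypeProd, j.2]
  rw [h1, h2]
  rw [← Fintype.prod_subtype_mul_prod_subtype p
    (fun j => x j ((Equiv.piEquivPiSubtypeProd p (fun j => Fin (s' j))).symm (g, h) j))]
  have h3 : ∀ j : {x : ι // p x},
      x j.1 ((Equiv.piEquivPiSubtypeProd p (fun j => Fin (s' j))).symm (g, h) j.1)
        = x j.1 (g j) := by
    intro j; rw [congrFun h1 j]
  have h4 : ∀ j : {x : ι // ¬ p x},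
      x j.1 ((Equiv.piEquivPiSubtypeProd p (fun j => Fin (s' j))).symm (g, h) j.1)
        = x j.1 (h j) := by
    intro j; rw [congrFun h2 j]
  rw [Finset.prod_congr rfl (fun j _ => h3 j), Finset.prod_congr rfl (fun j _ => h4 j)]
  ring

lemma hasPrkDecomp_of_coeffDecomp (c : (∀ i : Fin d, Fin (s i)) → ℤ) (m : ℕ)
    (h : CoeffDecomp K c m) : HasPrkDecomp (intForm K c) m := by
  classical
  obtain ⟨I, hI, hIc, a, b, hab⟩ := h
  refine ⟨fun i => cForm K (fun kv => a i (fun j => kv j.1) * b i (fun j => kv j.1)), ?_, ?_⟩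
  · intro i
    refine ⟨{x | x ∈ I i}, ?_, ?_, ?_⟩
    · obtain ⟨x, hx⟩ := hI i
      exact ⟨x, hx⟩
    · obtain ⟨x, hx⟩ := hIc i
      exact ⟨x, Finset.mem_compl.1 hx⟩
    · exact ⟨_, _, fun x => cForm_factor (fun x => x ∈ I i) (a i) (b i) x⟩
  · apply MultilinearMap.ext
    intro x
    rw [intForm_eq_cForm, MultilinearMap.sum_apply, cForm_apply]
    have : ∀ i : Fin m, (cForm K (fun kv => a i (fun j => kv j.1) * b i (fun j => kv j.1))) x
        = ∑ kv : (∀ i : Fin d, Fin (s i)),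
            a i (fun j => kv j.1) * b i (fun j => kv j.1) * ∏ j, x j (kv j) :=
      fun i => cForm_apply K _ x
    simp only [this]
    rw [Finset.sum_comm]
    refine Finset.sum_congr rfl ?_
    intro kv _
    rw [hab kv, Finset.sum_mul]

end

section Sentences

open FirstOrder FirstOrder.Language FirstOrder.Field FirstOrder.Ring

variable {d : ℕ} {s : Fin d → ℕ}

/-- Variable index type for the decomposition sentence. -/
abbrev DecVar (s : Fin d → ℕ) (m : ℕ) (I : Fin m → Finset (Fin d)) : Type :=
  (Σ i : Fin m, ((j : {x : Fin d // x ∈ I i}) → Fin (s j.1))) ⊕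
  (Σ i : Fin m, ((j : {x : Fin d // x ∉ I i}) → Fin (s j.1)))

noncomputable def decPoly (m : ℕ) (I : Fin m → Finset (Fin d))
    (kv : ∀ i : Fin d, Fin (s i)) : FreeCommRing (DecVar s m I) :=
  ∑ i : Fin m, FreeCommRing.of (Sum.inl ⟨i, fun j => kv j.1⟩) *
    FreeCommRing.of (Sum.inr ⟨i, fun j => kv j.1⟩)

noncomputable def decSentence (c : (∀ i : Fin d, Fin (s i)) → ℤ) (m : ℕ) :
    Language.ring.Sentence :=
  BoundedFormula.iSup
    (fun I' : {I : Fin m → Finset (Fin d) //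
      (∀ i, (I i).Nonempty) ∧ ∀ i, ((I i)ᶜ).Nonempty} =>
      Formula.iExs (DecVar s m I'.1)
      (Formula.relabel (Sum.inr : DecVar s m I'.1 → Empty ⊕ DecVar s m I'.1) <|
      BoundedFormula.iInf (fun kv : ∀ i : Fin d, Fin (s i) =>
        Term.equal (termOfFreeCommRing (decPoly m I'.1 kv))
          (termOfFreeCommRing ((c kv : FreeCommRing (DecVar s m I'.1)))))))

variable {K : Type*} [Field K] [CompatibleRing K]

lemma realize_decSentence (c : (∀ i : Fin d, Fin (s i)) → ℤ) (m : ℕ) :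
    K ⊨ decSentence c m ↔ CoeffDecomp K c m := by
  classical
  rw [decSentence, Sentence.Realize, Formula.Realize, BoundedFormula.realize_iSup]
  constructor
  · rintro ⟨⟨I, ⟨hI, hIc⟩⟩, hre⟩
    rw [BoundedFormula.realize_iExs] at hre
    obtain ⟨v, hv⟩ := hre
    rw [Formula.realize_relabel, Formula.Realize, BoundedFormula.realize_iInf] at hv
    refine ⟨I, hI, hIc, fun i g => v (Sum.inl ⟨i, g⟩), fun i g => v (Sum.inr ⟨i, g⟩), ?_⟩
    intro kv
    have := hv kv
    replace this := Formula.realize_equal.mp this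
    rw [realize_termOfFreeCommRing, realize_termOfFreeCommRing, map_intCast] at this
    rw [← this, decPoly, map_sum]
    simp [FreeCommRing.lift_of]
  · rintro ⟨I, hI, hIc, a, b, hab⟩
    refine ⟨⟨I, ⟨hI, hIc⟩⟩, ?_⟩
    rw [BoundedFormula.realize_iExs]
    refine ⟨Sum.elim (fun q => a q.1 q.2) (fun q => b q.1 q.2), ?_⟩
    rw [Formula.realize_relabel, Formula.Realize, BoundedFormula.realize_iInf]
    intro kv
    refine Formula.realize_equal.mpr ?_
    rw [realize_termOfFreeCommRing, realize_termOfFreeCommRing, map_intCast]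
    rw [decPoly, map_sum]
    simp only [map_mul, FreeCommRing.lift_of, Sum.elim_inr, Sum.elim_inl]
    exact (hab kv).symm

end Sentences

section Main
open FirstOrder FirstOrder.Language FirstOrder.Field FirstOrder.Ring

/-- if a multilinear form with integer coefficients has partition rank
`≥ r̄` over the algebraic closure of `F_p` (equivalently over every algebraically closed
field of characteristic `p`) for infinitely many primes `p`, then it has partition rank
`≥ r̄` over the algebraic closure of `ℚ` (equivalently over every algebraically closed
field of characteristic `0`). -/
theorem partition_rank_transfer {d : ℕ} (hd : 2 ≤ d) {s : Fin d → ℕ}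
    (c : (∀ i : Fin d, Fin (s i)) → ℤ) (rb : ℕ)
    (hinf : {p : ℕ | p.Prime ∧
      ∀ (K : Type) [Field K] [IsAlgClosed K] [CharP K p],
        ∀ m : ℕ, HasPrkDecomp (intForm K c) m → rb ≤ m}.Infinite) :
    ∀ (K : Type) [Field K] [IsAlgClosed K] [CharZero K],
      ∀ m : ℕ, HasPrkDecomp (intForm K c) m → rb ≤ m := by
  classical
  intro K _ _ _ m hdec
  letI := compatibleRingOfRing K
  haveI : CharP K 0 := CharP.ofCharZero K
  have hK : K ⊨ decSentence (s := s) c m :=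
    (realize_decSentence c m).2 (coeffDecomp_of_hasPrkDecomp c m hdec)
  have h0 : Theory.ACF 0 ⊨ᵇ decSentence (s := s) c m := by
    rcases (ACF_isComplete (Or.inr rfl)).2 (decSentence (s := s) c m) with h | h
    · exact h
    · exfalso
      have := Theory.models_sentence_iff.1 h ⟨K⟩
      rw [Sentence.realize_not] at this
      exact this hK
  have hfin := finite_ACF_prime_not_realize_of_ACF_zero_realize _ h0
  set S : Set ℕ := {p : ℕ | p.Prime ∧
      ∀ (K : Type) [Field K] [IsAlgClosed K] [CharP K p],
        ∀ m : ℕ, HasPrkDecomp (intForm K c) m → rb ≤ m} with hSdef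
  have hS' : {p : Nat.Primes | (p : ℕ) ∈ S}.Infinite := by
    refine Set.Infinite.preimage hinf ?_
    intro p hp
    exact ⟨⟨p, hp.1⟩, rfl⟩
  obtain ⟨p, hpS, hpgood⟩ :=
    (hS'.diff hfin).nonempty
  simp only [Set.mem_diff, Set.mem_setOf_eq, not_not] at hpgood
  have hpmodels : Theory.ACF (p : ℕ) ⊨ᵇ decSentence (s := s) c m := hpgood
  haveI : Fact (p : ℕ).Prime := ⟨p.2⟩
  let K' := AlgebraicClosure (ZMod (p : ℕ))
  letI := compatibleRingOfRing K'
  haveI : CharP K' (p : ℕ) := charP_of_injective_algebraMap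
    (RingHom.injective (algebraMap (ZMod (p : ℕ)) K')) (p : ℕ)
  have hK' : K' ⊨ decSentence (s := s) c m := Theory.models_sentence_iff.1 hpmodels ⟨K'⟩
  have hdec' : HasPrkDecomp (intForm K' c) m :=
    hasPrkDecomp_of_coeffDecomp c m ((realize_decSentence c m).1 hK')
  exact hpS.2 K' m hdec'

end Main
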